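/- Let T be a tree on n vertices with adjacency matrix A and degree diagonal matrix D, and define the q-Laplacian L^q_T = I + q^2(D - I) - qA over the polynomial ring R[q]. Then det(L^q_T) = 1 - q^2. -/

import Mathlib

open SimpleGraph Matrix Polynomial

/-- The `q`-Laplacian `I + q^2 (D - I) - q A` of a graph, entrywise. -/
noncomputable def qLap {n : ℕ} (G : SimpleGraph (Fin n)) [DecidableRel G.Adj]
    {R : Type*} [CommRing R] (q : R) : Matrix (Fin n) (Fin n) R :=
  Matrix.of fun i j =>
    if i = j then 1 + q ^ 2 * ((G.degree i : R) - 1)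
    else if G.Adj i j then -q else 0

/-- General-vertex-type version of `qLap`. -/
noncomputable def qLapV {V : Type} [Fintype V] [DecidableEq V] (G : SimpleGraph V)
    [DecidableRel G.Adj] {R : Type*} [CommRing R] (q : R) : Matrix V V R :=
  Matrix.of fun i j =>
    if i = j then 1 + q ^ 2 * ((G.degree i : R) - 1)
    else if G.Adj i j then -q else 0

lemma qLap_eq_qLapV {n : ℕ} (G : SimpleGraph (Fin n)) [DecidableRel G.Adj]
    {R : Type*} [CommRing R] (q : R) : qLap G q = qLapV G q := by
  rfl

/-- Lift a walk whose support lies in `s` to the induced graph. -/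
lemma reachable_induce_of_support {V : Type} {G : SimpleGraph V} (s : Set V) :
    ∀ {a b : V} (p : G.Walk a b), (∀ x ∈ p.support, x ∈ s) →
      ∀ (ha : a ∈ s) (hb : b ∈ s), (G.induce s).Reachable ⟨a, ha⟩ ⟨b, hb⟩
  | _, _, SimpleGraph.Walk.nil, _, _, _ => Reachable.refl _
  | a, b, SimpleGraph.Walk.cons h q, hs, ha, hb => by
    rename_i c
    have hc : c ∈ s := hs c (by simp [Walk.support_cons])
    exact Reachable.trans (SimpleGraph.Adj.reachable (by simpa using h))
      (reachable_induce_of_support s q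
        (fun x hx => hs x (by simp [Walk.support_cons, hx])) hc hb)

/-- A path between vertices different from a leaf `v` avoids `v`. -/
lemma leaf_not_mem_support {V : Type} {G : SimpleGraph V} {v u : V}
    (hu : ∀ w, G.Adj v w → w = u) {a b : V} (ha : a ≠ v) (hb : b ≠ v)
    (p : G.Walk a b) (hp : p.IsPath) : v ∉ p.support := by
  intro hv
  obtain ⟨q, r, rfl⟩ := SimpleGraph.Walk.mem_support_iff_exists_append.mp hv
  have hqn : ¬ q.Nil := Walk.not_nil_of_ne ha
  have hrn : ¬ r.Nil := Walk.not_nil_of_ne (Ne.symm hb)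
  have hqrn : ¬ q.reverse.Nil := by
    rw [Walk.nil_iff_length_eq] at hqn ⊢
    simpa using hqn
  obtain ⟨x, hx, q₁, hq₁⟩ := Walk.not_nil_iff.mp hqrn
  obtain ⟨y, hy, r₁, hr₁⟩ := Walk.not_nil_iff.mp hrn
  have hxu : x = u := hu x hx
  have hyu : y = u := hu y hy
  have huq : u ∈ q.support := by
    have hmem : x ∈ q.reverse.support := by
      rw [hq₁]
      simp [Walk.support_cons]
    rw [Walk.support_reverse, List.mem_reverse] at hmem
    rwa [hxu] at hmem
  have hur : u ∈ r.support.tail := by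
    rw [hr₁]
    simpa [Walk.support_cons] using (hyu ▸ r₁.start_mem_support)
  have hnd := hp.support_nodup
  rw [Walk.support_append, List.nodup_append] at hnd
  exact hnd.2.2 u huq u hur rfl

lemma exists_leaf {V : Type} [Fintype V] [DecidableEq V] (G : SimpleGraph V)
    [DecidableRel G.Adj] (hG : G.IsTree) (h2 : 2 ≤ Fintype.card V) :
    ∃ v, G.degree v = 1 := by
  by_contra h
  push_neg at h
  have hpos : ∀ v, 1 ≤ G.degree v := by
    intro v
    obtain ⟨w, hw⟩ := Fintype.exists_ne_of_one_lt_card (by omega) v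
    obtain ⟨p⟩ := hG.isConnected.preconnected v w
    obtain ⟨x, hx, -, -⟩ := Walk.not_nil_iff.mp (Walk.not_nil_of_ne (p := p) (Ne.symm hw))
    exact (G.degree_pos_iff_exists_adj v).mpr ⟨x, hx⟩
  have h2' : ∀ v, 2 ≤ G.degree v := by
    intro v
    have h1 := hpos v
    have h2 := h v
    omega
  have hsum := G.sum_degrees_eq_twice_card_edges
  have hcard := hG.card_edgeFinset
  have hle : Fintype.card V * 2 ≤ ∑ v, G.degree v := by
    calc Fintype.card V * 2 = ∑ _v : V, 2 := by
          simp [Finset.sum_const, Finset.card_univ, mul_comm]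
      _ ≤ ∑ v, G.degree v := Finset.sum_le_sum fun v _ => h2' v
  omega

lemma induce_degree {V : Type} [Fintype V] [DecidableEq V] {G : SimpleGraph V}
    [DecidableRel G.Adj] {v : V} [DecidableRel (G.induce {x | x ≠ v}).Adj]
    (w : {x : V // x ≠ v}) :
    (G.induce {x | x ≠ v}).degree w = ((G.neighborFinset w.1).erase v).card := by
  rw [SimpleGraph.degree]
  refine Finset.card_bij (fun x _ => (x : V)) ?_ ?_ ?_
  · intro x hx
    rw [SimpleGraph.mem_neighborFinset] at hx
    simp only [Finset.mem_erase, SimpleGraph.mem_neighborFinset]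
    exact ⟨x.2, by simpa using hx⟩
  · intro x _ y _ hxy
    exact Subtype.ext hxy
  · intro y hy
    simp only [Finset.mem_erase, SimpleGraph.mem_neighborFinset] at hy
    exact ⟨⟨y, hy.1⟩, by simp [SimpleGraph.mem_neighborFinset, hy.2], rfl⟩

lemma det_qLapV_tree : ∀ (n : ℕ) (V : Type) [Fintype V] [DecidableEq V],
    Fintype.card V = n → ∀ (G : SimpleGraph V), ∀ _ : DecidableRel G.Adj, G.IsTree →
    (qLapV G (Polynomial.X : Polynomial ℝ)).det = 1 - Polynomial.X ^ 2 := by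
  intro n
  induction n using Nat.strong_induction_on with
  | _ n IH =>
  intro V _ _ hn G _ hG
  rcases Nat.lt_or_ge n 2 with hsmall | h2
  · -- n = 0 or 1
    interval_cases n
    · haveI := hG.isConnected.nonempty
      exact absurd hn Fintype.card_ne_zero
    · obtain ⟨a, ha⟩ := Fintype.card_eq_one_iff.mp hn
      rw [Matrix.det_eq_elem_of_card_eq_one hn a]
      have hdeg : G.degree a = 0 := by
        have hemp : G.neighborFinset a = ∅ := by
          ext b
          simp only [SimpleGraph.mem_neighborFinset, Finset.notMem_empty, iff_false]
          intro hadj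
          exact G.irrefl ((ha b ▸ hadj : G.Adj a a))
        rw [← SimpleGraph.card_neighborFinset_eq_degree, hemp, Finset.card_empty]
      simp only [qLapV, Matrix.of_apply, if_pos rfl, hdeg]
      push_cast
      ring
  · -- main case: find a leaf v with neighbor u
    obtain ⟨v, hv⟩ := exists_leaf G hG (by omega)
    rw [← SimpleGraph.card_neighborFinset_eq_degree] at hv
    obtain ⟨u, hu⟩ := Finset.card_eq_one.mp hv
    have hadj : G.Adj v u := by
      rw [← SimpleGraph.mem_neighborFinset, hu]; exact Finset.mem_singleton_self u
    have huniq : ∀ w, G.Adj v w → w = u := by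
      intro w hw
      have hmem : w ∈ G.neighborFinset v := (SimpleGraph.mem_neighborFinset _ _ _).mpr hw
      rw [hu, Finset.mem_singleton] at hmem
      exact hmem
    have hvu : v ≠ u := hadj.ne
    have hvu' : u ≠ v := Ne.symm hvu
    set q : Polynomial ℝ := Polynomial.X with hq
    set s : Set V := {x | x ≠ v} with hs
    haveI hdecs : DecidableRel (G.induce s).Adj := fun a b =>
      (inferInstance : Decidable (G.Adj a b))
    -- the induced graph is a tree
    have hT' : (G.induce s).IsTree := by
      constructor
      · rw [connected_iff]
        constructor
        · rintro ⟨a, ha⟩ ⟨b, hb⟩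
          obtain ⟨p, hp, -⟩ := hG.existsUnique_path a b
          have hvp := leaf_not_mem_support huniq ha hb p hp
          exact reachable_induce_of_support s p
            (fun x hx hxv => hvp (hxv ▸ hx)) ha hb
        · exact ⟨⟨u, hvu'⟩⟩
      · intro x c hc
        exact hG.IsAcyclic (c.map (SimpleGraph.Embedding.induce s).toHom)
          (hc.map Subtype.val_injective)
    have hcard' : Fintype.card ↥s = n - 1 := by
      rw [← hn, Fintype.card_subtype]
      have hfe : Finset.filter (fun x : V => x ∈ s) Finset.univ
          = Finset.univ.erase v := by
        ext x; simp [hs, Finset.mem_erase]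
      rw [hfe, Finset.card_erase_of_mem (Finset.mem_univ v), Finset.card_univ]
    -- degrees in the induced graph
    have hdegu_pos : 1 ≤ G.degree u :=
      (G.degree_pos_iff_exists_adj u).mpr ⟨v, hadj.symm⟩
    have hdeg_u : (G.induce s).degree ⟨u, hvu'⟩ = G.degree u - 1 := by
      rw [induce_degree,
        Finset.card_erase_of_mem ((SimpleGraph.mem_neighborFinset _ _ _).mpr hadj.symm),
        SimpleGraph.card_neighborFinset_eq_degree]
    have hdeg_w : ∀ (a : V) (ha : a ∈ s), a ≠ u →
        (G.induce s).degree ⟨a, ha⟩ = G.degree a := by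
      intro a ha hau
      rw [induce_degree, Finset.erase_eq_of_notMem,
        SimpleGraph.card_neighborFinset_eq_degree]
      rw [SimpleGraph.mem_neighborFinset]
      intro hav
      exact hau (huniq a hav.symm)
    -- matrix bookkeeping
    set M : Matrix V V (Polynomial ℝ) := qLapV G q with hM
    have hMvv : M v v = 1 := by
      have hd1 : G.degree v = 1 := by rw [← SimpleGraph.card_neighborFinset_eq_degree, hv]
      simp [hM, qLapV, hd1]
    have hMrow : ∀ b, b ≠ v → M v b = if b = u then -q else 0 := by
      intro b hb
      simp only [hM, qLapV, Matrix.of_apply, if_neg (Ne.symm hb)]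
      by_cases hbu : b = u
      · subst hbu; simp [hadj]
      · simp only [if_neg hbu]
        rw [if_neg]
        intro hadj'
        exact hbu (huniq b hadj')
    have hMcol : ∀ a, a ≠ v → M a v = if a = u then -q else 0 := by
      intro a ha
      simp only [hM, qLapV, Matrix.of_apply, if_neg ha]
      by_cases hau : a = u
      · subst hau; simp [hadj.symm]
      · simp only [if_neg hau]
        rw [if_neg]
        intro hadj'
        exact hau (huniq a hadj'.symm)
    set M₁ : Matrix V V (Polynomial ℝ) := M.updateRow u (M u + q • M v) with hM₁
    set M₂ : Matrix V V (Polynomial ℝ) := M₁.updateCol u (fun k => M₁ k u + q • M₁ k v)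
      with hM₂
    have hdet2 : M₂.det = M.det := by
      rw [hM₂, Matrix.det_updateCol_add_smul_self M₁ hvu' q,
        hM₁, Matrix.det_updateRow_add_smul_self M hvu' q]
    have hM₁app : ∀ a b, M₁ a b = if a = u then M u b + q * M v b else M a b := by
      intro a b
      rw [hM₁, Matrix.updateRow_apply]
      split_ifs with h
      · simp [h]
      · rfl
    have hM₂app : ∀ a b, M₂ a b = if b = u then M₁ a u + q * M₁ a v else M₁ a b := by
      intro a b
      rw [hM₂, Matrix.updateCol_apply]
      split_ifs with h
      · simp [h]
      · rfl
    -- entries of M away from v agree with the induced q-Laplacian, except at (u,u)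
    have hGent : ∀ (a b : V) (ha : ¬ a = v) (hb : ¬ b = v), ¬(a = u ∧ b = u) →
        M a b = qLapV (G.induce s) q ⟨a, ha⟩ ⟨b, hb⟩ := by
      intro a b ha hb hnu
      simp only [hM, qLapV, Matrix.of_apply]
      by_cases hab : a = b
      · subst hab
        rw [if_pos rfl, if_pos rfl, hdeg_w a ha (fun h => hnu ⟨h, h⟩)]
      · rw [if_neg hab, if_neg (fun h : (⟨a, ha⟩ : ↥s) = ⟨b, hb⟩ =>
          hab (congrArg Subtype.val h))]
        by_cases hGab : G.Adj a b
        · rw [if_pos hGab, if_pos (by simpa using hGab)]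
        · rw [if_neg hGab, if_neg (by simpa using hGab)]
    -- block structure
    have hblock : M₂ = (Matrix.fromBlocks
        (1 : Matrix {x : V // x = v} {x : V // x = v} (Polynomial ℝ)) 0 0
        (qLapV (G.induce s) q)).submatrix
        (Equiv.sumCompl (· = v)).symm (Equiv.sumCompl (· = v)).symm := by
      refine Matrix.ext fun a b => ?_
      rw [Matrix.submatrix_apply]
      by_cases hav : a = v <;> by_cases hbv : b = v
      · have hau : ¬ a = u := fun h => hvu (hav.symm.trans h)
        have hbu : ¬ b = u := fun h => hvu (hbv.symm.trans h)
        have eab : (⟨b, hbv⟩ : {x : V // x = v}) = ⟨a, hav⟩ :=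
          Subtype.ext (hbv.trans hav.symm)
        rw [Equiv.sumCompl_symm_apply_of_pos (p := (· = v)) hav,
          Equiv.sumCompl_symm_apply_of_pos (p := (· = v)) hbv,
          Matrix.fromBlocks_apply₁₁, eab, Matrix.one_apply_eq,
          hM₂app a b, if_neg hbu, hM₁app a b, if_neg hau, hav, hbv, hMvv]
      · have hau : ¬ a = u := fun h => hvu (hav.symm.trans h)
        rw [Equiv.sumCompl_symm_apply_of_pos (p := (· = v)) hav,
          Equiv.sumCompl_symm_apply_of_neg (p := (· = v)) hbv,
          Matrix.fromBlocks_apply₁₂, Matrix.zero_apply,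
          hM₂app a b]
        by_cases hbu : b = u
        · rw [if_pos hbu, hM₁app a u, if_neg hau, hM₁app a v, if_neg hau, hav, hMvv,
            hMrow u hvu', if_pos rfl]
          ring
        · rw [if_neg hbu, hM₁app a b, if_neg hau, hav, hMrow b hbv, if_neg hbu]
      · have hbu : ¬ b = u := fun h => hvu (hbv.symm.trans h)
        rw [Equiv.sumCompl_symm_apply_of_neg (p := (· = v)) hav,
          Equiv.sumCompl_symm_apply_of_pos (p := (· = v)) hbv,
          Matrix.fromBlocks_apply₂₁, Matrix.zero_apply,
          hM₂app a b, if_neg hbu, hM₁app a b]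
        by_cases hau : a = u
        · rw [if_pos hau, hbv, hMvv, hMcol u hvu', if_pos rfl]
          ring
        · rw [if_neg hau, hbv, hMcol a hav, if_neg hau]
      · rw [Equiv.sumCompl_symm_apply_of_neg (p := (· = v)) hav,
          Equiv.sumCompl_symm_apply_of_neg (p := (· = v)) hbv,
          Matrix.fromBlocks_apply₂₂]
        by_cases hau : a = u <;> by_cases hbu : b = u
        · have ea : (⟨a, hav⟩ : {x : V // ¬ x = v}) = ⟨u, hvu'⟩ := Subtype.ext hau
          have eb : (⟨b, hbv⟩ : {x : V // ¬ x = v}) = ⟨u, hvu'⟩ := Subtype.ext hbu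
          rw [ea, eb, hM₂app a b, if_pos hbu, hM₁app a u, if_pos hau,
            hM₁app a v, if_pos hau, hMvv, hMcol u hvu', if_pos rfl,
            hMrow u hvu', if_pos rfl]
          have hdiag : qLapV (G.induce s) q ⟨u, hvu'⟩ ⟨u, hvu'⟩
              = 1 + q ^ 2 * (((G.degree u - 1 : ℕ) : Polynomial ℝ) - 1) := by
            simp [qLapV, hdeg_u]
          have hMuu : M u u = 1 + q ^ 2 * ((G.degree u : Polynomial ℝ) - 1) := by
            simp [hM, qLapV]
          rw [hMuu, hdiag, Nat.cast_sub hdegu_pos]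
          push_cast
          ring
        · have ea : (⟨a, hav⟩ : {x : V // ¬ x = v}) = ⟨u, hvu'⟩ := Subtype.ext hau
          rw [ea, hM₂app a b, if_neg hbu, hM₁app a b, if_pos hau, hMrow b hbv,
            if_neg hbu, mul_zero, add_zero]
          exact hGent u b hvu' hbv (fun h => hbu h.2)
        · have eb : (⟨b, hbv⟩ : {x : V // ¬ x = v}) = ⟨u, hvu'⟩ := Subtype.ext hbu
          rw [eb, hM₂app a b, if_pos hbu, hM₁app a u, if_neg hau, hM₁app a v,
            if_neg hau, hMcol a hav, if_neg hau, mul_zero, add_zero]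
          exact hGent a u hav hvu' (fun h => hau h.1)
        · rw [hM₂app a b, if_neg hbu, hM₁app a b, if_neg hau]
          exact hGent a b hav hbv (fun h => hau h.1)
    have hdet3 : M.det = (qLapV (G.induce s) q).det := by
      rw [← hdet2, hblock,
        Matrix.det_submatrix_equiv_self ((Equiv.sumCompl (· = v)).symm),
        Matrix.det_fromBlocks_zero₂₁, Matrix.det_one, one_mul]
    rw [hdet3]
    exact IH (n - 1) (by omega) ↥s hcard' (G.induce s) hdecs hT'

set_option maxHeartbeats 1000000 in
/-- For a tree `T` on `n ≥ 1` vertices, `det(L^q_T) = 1 - q^2` in `ℝ[q]`. -/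
theorem det_qLap_tree {n : ℕ} (hn : 1 ≤ n) (G : SimpleGraph (Fin n))
    [DecidableRel G.Adj] (hG : G.IsTree) :
    (qLap G (Polynomial.X : Polynomial ℝ)).det = 1 - Polynomial.X ^ 2 := by
  have h := det_qLapV_tree n (Fin n) (Fintype.card_fin n) G ‹_› hG
  rwa [← qLap_eq_qLapV] at h
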